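/- arXiv:2303.05610 — 5 statements merged into one kernel-verified Lean document; each statement's English description precedes it below -/
import Mathlib

section
/- Let V be a finite-dimensional vector space over a field and N : V → V a nilpotent linear endomorphism. Then there exists a unique finite increasing filtration (Fil_j)_{j ∈ ℤ} of V by subspaces such that Fil_j = 0 for j sufficiently small, Fil_j = V for j sufficiently large, N(Fil_j) ⊆ Fil_{j-2} for all j, and for every k ≥ 0 the map induced by N^k from the graded piece gr_k = Fil_k/Fil_{k-1} to gr_{-k} = Fil_{-k}/Fil_{-k-1} is an isomorphism. -/
namespace MonodromyAux

variable {F V : Type*} [Field F] [AddCommGroup V] [Module F V]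

/-- The axioms of the monodromy filtration, matching the statement. -/
def Ax (N : Module.End F V) (Fil : ℤ → Submodule F V) : Prop :=
  Monotone Fil ∧
  (∃ a : ℤ, ∀ j ≤ a, Fil j = ⊥) ∧
  (∃ b : ℤ, ∀ j : ℤ, b ≤ j → Fil j = ⊤) ∧
  (∀ j : ℤ, ∀ x ∈ Fil j, N x ∈ Fil (j - 2)) ∧
  (∀ k : ℕ,
    (∀ y ∈ Fil (k : ℤ), (N ^ k) y ∈ Fil (-(k : ℤ))) ∧
    (∀ x ∈ Fil (-(k : ℤ)), ∃ y ∈ Fil (k : ℤ),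
      (N ^ k) y - x ∈ Fil (-(k : ℤ) - 1)) ∧
    (∀ y ∈ Fil (k : ℤ), (N ^ k) y ∈ Fil (-(k : ℤ) - 1) → y ∈ Fil ((k : ℤ) - 1)))

variable {N : Module.End F V} {Fil : ℤ → Submodule F V}

theorem pow_shift (hshift : ∀ j : ℤ, ∀ x ∈ Fil j, N x ∈ Fil (j - 2)) (k : ℕ) :
    ∀ (j : ℤ), ∀ x ∈ Fil j, (N ^ k) x ∈ Fil (j - 2 * k) := by
  induction k with
  | zero => intro j x hx; simpa using hx
  | succ k ih =>
    intro j x hx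
    have h2 := ih (j - 2) (N x) (hshift j x hx)
    have e : (N ^ (k + 1)) x = (N ^ k) (N x) := by
      rw [pow_succ]; rfl
    rw [e]
    have : j - 2 - 2 * (k : ℤ) = j - 2 * ((k : ℕ) + 1 : ℕ) := by push_cast; ring
    rwa [this] at h2

namespace Ax

theorem mono (h : Ax N Fil) : Monotone Fil := h.1
theorem shift (h : Ax N Fil) : ∀ j : ℤ, ∀ x ∈ Fil j, N x ∈ Fil (j - 2) := h.2.2.2.1
theorem surj (h : Ax N Fil) (k : ℕ) :
    ∀ x ∈ Fil (-(k : ℤ)), ∃ y ∈ Fil (k : ℤ), (N ^ k) y - x ∈ Fil (-(k : ℤ) - 1) :=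
  (h.2.2.2.2 k).2.1
theorem inj (h : Ax N Fil) (k : ℕ) :
    ∀ y ∈ Fil (k : ℤ), (N ^ k) y ∈ Fil (-(k : ℤ) - 1) → y ∈ Fil ((k : ℤ) - 1) :=
  (h.2.2.2.2 k).2.2

theorem ker_le (h : Ax N Fil) (k : ℕ) (x : V) (hx : (N ^ k) x = 0) :
    x ∈ Fil ((k : ℤ) - 1) := by
  obtain ⟨b, hb⟩ := h.2.2.1
  obtain ⟨i, hi⟩ : ∃ i : ℕ, b ≤ (k : ℤ) - 1 + i := ⟨(b - (k : ℤ) + 1).toNat, by omega⟩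
  have start : x ∈ Fil ((k : ℤ) - 1 + i) := by rw [hb _ hi]; trivial
  clear hi hb
  induction i with
  | zero => simpa using start
  | succ i ih =>
    apply ih
    have h1 : x ∈ Fil ((k + i : ℕ) : ℤ) := by
      have e : ((k + i : ℕ) : ℤ) = (k : ℤ) - 1 + (i + 1 : ℕ) := by push_cast; ring
      rwa [e]
    have h2 : (N ^ (k + i)) x = 0 := by
      rw [add_comm, pow_add, Module.End.mul_apply, hx, map_zero]
    have h3 := h.inj (k + i) x h1 (by rw [h2]; exact zero_mem _)
    have e : ((k + i : ℕ) : ℤ) - 1 = (k : ℤ) - 1 + i := by push_cast; ring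
    rwa [e] at h3

theorem le_range (h : Ax N Fil) (k : ℕ) :
    Fil (-(k : ℤ)) ≤ LinearMap.range (N ^ k) := by
  obtain ⟨a, ha⟩ := h.2.1
  suffices H : ∀ (i : ℕ) (k : ℕ), ∀ x ∈ Fil (-(k : ℤ)),
      ∃ y, x - (N ^ k) y ∈ Fil (-(k : ℤ) - i) by
    intro x hx
    obtain ⟨i, hi⟩ : ∃ i : ℕ, -(k : ℤ) - i ≤ a := ⟨(-a - k).toNat, by omega⟩
    obtain ⟨y, hy⟩ := H i k x hx
    rw [ha _ hi] at hy
    have : x - (N ^ k) y = 0 := by simpa using hy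
    exact ⟨y, by rw [eq_comm, ← sub_eq_zero]; simpa using this⟩
  intro i
  induction i with
  | zero =>
    intro k x hx
    exact ⟨0, by simpa using hx⟩
  | succ i ih =>
    intro k x hx
    obtain ⟨y₀, _, hr⟩ := h.surj k x hx
    have hr' : x - (N ^ k) y₀ ∈ Fil (-((k + 1 : ℕ) : ℤ)) := by
      have : x - (N ^ k) y₀ = -((N ^ k) y₀ - x) := by abel
      rw [this]
      have e : (-((k + 1 : ℕ) : ℤ)) = -(k : ℤ) - 1 := by push_cast; ring
      rw [e]
      exact neg_mem hr
    obtain ⟨y₁, hy₁⟩ := ih (k + 1) _ hr'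
    refine ⟨y₀ + N y₁, ?_⟩
    have e : (N ^ k) (y₀ + N y₁) = (N ^ k) y₀ + (N ^ (k + 1)) y₁ := by
      rw [map_add, pow_succ, Module.End.mul_apply]
    rw [e]
    have e2 : x - ((N ^ k) y₀ + (N ^ (k + 1)) y₁) = x - (N ^ k) y₀ - (N ^ (k + 1)) y₁ := by abel
    rw [e2]
    have e3 : (-((k + 1 : ℕ) : ℤ) - i) = -(k : ℤ) - (i + 1 : ℕ) := by push_cast; ring
    rwa [e3] at hy₁

theorem pow_shift' (h : Ax N Fil) (k : ℕ) (j : ℤ) :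
    ∀ x ∈ Fil j, (N ^ k) x ∈ Fil (j - 2 * k) :=
  pow_shift h.shift k j

theorem top_of (h : Ax N Fil) {n : ℕ} (hNn : N ^ n = 0) :
    ∀ j : ℤ, (n : ℤ) - 1 ≤ j → Fil j = ⊤ := by
  intro j hj
  rw [eq_top_iff]
  intro x _
  exact h.mono hj (h.ker_le n x (by rw [hNn]; rfl))

theorem bot_of (h : Ax N Fil) {n : ℕ} (hNn : N ^ n = 0) :
    ∀ j : ℤ, j ≤ -(n : ℤ) → Fil j = ⊥ := by
  intro j hj
  rw [eq_bot_iff]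
  refine le_trans (h.mono hj) (le_trans (h.le_range n) ?_)
  rw [hNn, LinearMap.range_zero]

theorem eq_ker (h : Ax N Fil) {n : ℕ} (hNn : N ^ (n + 1) = 0) :
    Fil ((n : ℤ) - 1) = LinearMap.ker (N ^ n) := by
  apply le_antisymm
  · intro x hx
    rw [LinearMap.mem_ker]
    have h1 := h.pow_shift' n _ x hx
    have e : (n : ℤ) - 1 - 2 * n ≤ -((n + 1 : ℕ) : ℤ) := by push_cast; omega
    have h2 := h.mono e h1
    rwa [h.bot_of hNn _ le_rfl, Submodule.mem_bot] at h2
  · intro x hx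
    exact h.ker_le n x (LinearMap.mem_ker.mp hx)

theorem eq_range (h : Ax N Fil) {n : ℕ} (hNn : N ^ (n + 1) = 0) :
    Fil (-(n : ℤ)) = LinearMap.range (N ^ n) := by
  apply le_antisymm
  · exact h.le_range n
  · rintro x ⟨y, rfl⟩
    have hy : y ∈ Fil (n : ℤ) := by
      rw [h.top_of hNn (n : ℤ) (by push_cast; omega)]; trivial
    have := h.pow_shift' n _ y hy
    have e : (n : ℤ) - 2 * n = -(n : ℤ) := by ring
    rwa [e] at this

end Ax

universe u v

theorem aux {F : Type u} [Field F] (n : ℕ) :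
    ∀ (V : Type v) [AddCommGroup V] [Module F V] (N : Module.End F V),
      N ^ n = 0 → ∃! Fil : ℤ → Submodule F V, Ax N Fil := by
  induction n with
  | zero =>
    intro V _ _ N hN
    have hx0 : ∀ x : V, x = 0 := by
      intro x
      have : (1 : Module.End F V) x = (0 : Module.End F V) x := by rw [← pow_zero N, hN]
      simpa using this
    refine ⟨fun _ => ⊤, ⟨monotone_const, ⟨0, fun j _ => ?_⟩, ⟨0, fun j _ => rfl⟩,
      fun j x _ => trivial, fun k => ⟨fun y _ => trivial, fun x _ => ⟨0, trivial, trivial⟩,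
      fun y _ _ => trivial⟩⟩, ?_⟩
    · rw [eq_bot_iff]; intro x _; simpa using hx0 x
    · intro Fil' _
      funext j
      rw [eq_top_iff]
      intro x _
      rw [hx0 x]
      exact zero_mem _
  | succ m IH =>
    match m, IH with
    | 0, _ =>
      intro V _ _ N hN
      rw [pow_one] at hN
      refine ⟨fun j => if 0 ≤ j then ⊤ else ⊥, ⟨?_, ⟨-1, fun j hj => if_neg (by omega)⟩,
        ⟨0, fun j hj => if_pos hj⟩, ?_, ?_⟩, ?_⟩
      · intro i j hij
        dsimp only
        split_ifs with h1 h2 h2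
        · exact le_rfl
        · omega
        · exact bot_le
        · exact le_rfl
      · intro j x _
        rw [hN]
        exact zero_mem _
      · intro k
        refine ⟨?_, ?_, ?_⟩
        · intro y hy
          match k with
          | 0 => simpa using hy
          | (k+1) =>
            rw [hN, zero_pow (Nat.succ_ne_zero k)]
            exact zero_mem _
        · intro x hx
          match k with
          | 0 =>
            refine ⟨x, by simpa using hx, ?_⟩
            simp only [pow_zero, Module.End.one_apply, sub_self]
            exact zero_mem _
          | (k+1) =>
            refine ⟨0, zero_mem _, ?_⟩
            have hx0 : x = 0 := by
              beta_reduce at hx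
              split_ifs at hx with hc
              · exfalso; push_cast at hc; omega
              · simpa using hx
            rw [hx0, hN, zero_pow (Nat.succ_ne_zero k)]
            simpa using zero_mem _
        · intro y hy h2
          match k with
          | 0 =>
            have : y = 0 := by simpa using h2
            rw [this]
            exact zero_mem _
          | (k+1) =>
            beta_reduce
            rw [if_pos (by push_cast; omega : (0:ℤ) ≤ ((k+1:ℕ):ℤ) - 1)]
            trivial
      · intro Fil₁ h₁
        have hN1 : N ^ 1 = 0 := by rw [pow_one]; exact hN
        funext j
        by_cases hj : (0:ℤ) ≤ j
        · rw [if_pos hj, h₁.top_of hN1 j (by omega)]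
        · rw [if_neg hj, h₁.bot_of hN1 j (by omega)]
    | (p+1), IH =>
      intro V _ _ N hN
      -- `hN : N ^ (p + 1 + 1) = 0`
      have hpow0 : ∀ a : ℕ, p + 2 ≤ a → N ^ a = 0 := by
        intro a ha
        obtain ⟨c, rfl⟩ := Nat.exists_eq_add_of_le ha
        rw [pow_add, show N ^ (p + 2) = N ^ (p + 1 + 1) from rfl, hN, zero_mul]
      set Kn : Submodule F V := LinearMap.ker (N ^ (p + 1)) with hKn
      set Rn : Submodule F V := LinearMap.range (N ^ (p + 1)) with hRn
      have memKn : ∀ x : V, x ∈ Kn ↔ (N ^ (p + 1)) x = 0 := fun x => LinearMap.mem_ker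
      have memRn : ∀ x : V, x ∈ Rn ↔ ∃ y, (N ^ (p + 1)) y = x := fun x => LinearMap.mem_range
      have hNxK : ∀ x : V, N x ∈ Kn := by
        intro x
        rw [memKn, ← Module.End.mul_apply, ← pow_succ, hpow0 (p + 1 + 1) (by omega)]
        rfl
      have hNK : ∀ x ∈ Kn, N x ∈ Kn := fun x _ => hNxK x
      have hRK : Rn ≤ Kn := by
        rintro x ⟨y, rfl⟩
        rw [memKn, ← Module.End.mul_apply, ← pow_add, hpow0 (p + 1 + (p + 1)) (by omega)]
        rfl
      have hNR : ∀ x ∈ Rn, N x = 0 := by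
        rintro x ⟨y, rfl⟩
        rw [← Module.End.mul_apply, ← pow_succ', hpow0 (p + 1 + 1) (by omega)]
        rfl
      set Nr : Kn →ₗ[F] Kn := N.restrict hNK with hNrdef
      have hNrval : ∀ (k : ℕ) (x : Kn), (((Nr ^ k) x : Kn) : V) = (N ^ k) (x : V) := by
        intro k x
        rw [hNrdef, Module.End.pow_restrict, LinearMap.restrict_coe_apply]
      set I' : Submodule F Kn := Rn.comap Kn.subtype with hI'
      have hmemI' : ∀ x : Kn, x ∈ I' ↔ (x : V) ∈ Rn := fun x => Iff.rfl
      set π : Kn →ₗ[F] (Kn ⧸ I') := I'.mkQ with hπdef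
      have hNrI : ∀ x ∈ I', Nr x ∈ I' := by
        intro x hx
        rw [hmemI'] at hx ⊢
        rw [hNrdef, LinearMap.restrict_coe_apply]
        obtain ⟨y, hy⟩ := hx
        refine ⟨N y, ?_⟩
        rw [← Module.End.mul_apply, ← pow_succ, pow_succ', Module.End.mul_apply, hy]
      set N' : Module.End F (Kn ⧸ I') := Submodule.mapQ I' I' Nr hNrI with hN'def
      have hπN' : ∀ x : Kn, N' (π x) = π (Nr x) := by
        intro x
        rw [hπdef, Submodule.mkQ_apply, Submodule.mkQ_apply, hN'def, Submodule.mapQ_apply]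
      have hπN'k : ∀ (k : ℕ) (x : Kn), (N' ^ k) (π x) = π ((Nr ^ k) x) := by
        intro k
        induction k with
        | zero => intro x; rfl
        | succ k ih =>
          intro x
          have e : (N' ^ (k + 1)) (π x) = (N' ^ k) (N' (π x)) := by rw [pow_succ]; rfl
          rw [e, hπN', ih]
          exact congrArg π (by rw [pow_succ]; rfl)
      have hπsurj : Function.Surjective π := Submodule.mkQ_surjective I'
      have hπ0 : ∀ x : Kn, π x = 0 ↔ (x : V) ∈ Rn := by
        intro x
        rw [hπdef, Submodule.mkQ_apply, Submodule.Quotient.mk_eq_zero]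
        exact hmemI' x
      have hπeq : ∀ x y : Kn, π x = π y → (x - y : Kn) ∈ I' := by
        intro x y hxy
        rw [hπdef, Submodule.mkQ_apply, Submodule.mkQ_apply] at hxy
        exact (Submodule.Quotient.eq I').mp hxy
      have hN'nil : N' ^ (p + 1) = 0 := by
        apply LinearMap.ext
        intro x'
        obtain ⟨x, rfl⟩ := hπsurj x'
        rw [hπN'k, LinearMap.zero_apply, hπ0, hNrval]
        exact ⟨(x : V), rfl⟩
      obtain ⟨Fil', hax', huniq'⟩ := IH (Kn ⧸ I') N' hN'nil
      have hFil'top : ∀ j : ℤ, (p : ℤ) ≤ j → Fil' j = ⊤ := by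
        intro j hj
        apply hax'.top_of hN'nil
        push_cast
        omega
      have hFil'bot : ∀ j : ℤ, j ≤ -(p : ℤ) - 1 → Fil' j = ⊥ := by
        intro j hj
        apply hax'.bot_of hN'nil
        push_cast
        omega
      set mid : ℤ → Submodule F V :=
        fun j => Submodule.map Kn.subtype (Submodule.comap π (Fil' j)) with hmiddef
      have mem_mid : ∀ (j : ℤ) (x : V), x ∈ mid j ↔ ∃ hx : x ∈ Kn, π ⟨x, hx⟩ ∈ Fil' j := by
        intro j x
        constructor
        · intro h
          obtain ⟨y, hy, rfl⟩ := Submodule.mem_map.mp h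
          exact ⟨y.2, hy⟩
        · rintro ⟨hx, h⟩
          exact Submodule.mem_map.mpr ⟨⟨x, hx⟩, h, rfl⟩
      set FilC : ℤ → Submodule F V :=
        fun j => if (p : ℤ) + 1 ≤ j then ⊤ else if j ≤ -(p : ℤ) - 2 then ⊥ else mid j
        with hFilCdef
      have FilC_top : ∀ j, (p : ℤ) + 1 ≤ j → FilC j = ⊤ := by
        intro j hj
        rw [hFilCdef]
        beta_reduce
        rw [if_pos hj]
      have FilC_bot : ∀ j, j ≤ -(p : ℤ) - 2 → FilC j = ⊥ := by
        intro j hj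
        rw [hFilCdef]
        beta_reduce
        rw [if_neg (by omega), if_pos hj]
      have FilC_mid : ∀ j, -(p : ℤ) - 1 ≤ j → j ≤ (p : ℤ) → FilC j = mid j := by
        intro j h1 h2
        rw [hFilCdef]
        beta_reduce
        rw [if_neg (by omega), if_neg (by omega)]
      have hNkK : ∀ (k : ℕ) (x : Kn), (N ^ k) (x : V) ∈ Kn := by
        intro k x
        rw [memKn, ← Module.End.mul_apply, ← pow_add]
        rw [show p + 1 + k = k + (p + 1) from by omega, pow_add, Module.End.mul_apply,
          (memKn (x : V)).mp x.2, map_zero]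
      have hπNx : ∀ (x : V) (hx : x ∈ Kn), π ⟨N x, hNxK x⟩ = N' (π ⟨x, hx⟩) := by
        intro x hx
        rw [hπN']
        exact congrArg π (Subtype.ext (by rw [hNrdef, LinearMap.restrict_coe_apply]))
      have hπNkx : ∀ (k : ℕ) (x : V) (hx : x ∈ Kn),
          π ⟨(N ^ k) x, hNkK k ⟨x, hx⟩⟩ = (N' ^ k) (π ⟨x, hx⟩) := by
        intro k x hx
        rw [hπN'k]
        exact congrArg π (Subtype.ext (hNrval k ⟨x, hx⟩).symm)
      -- SHIFT for FilC
      have hCshift : ∀ j : ℤ, ∀ x ∈ FilC j, N x ∈ FilC (j - 2) := by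
        intro j x hx
        by_cases hj1 : (p : ℤ) + 3 ≤ j
        · rw [FilC_top _ (by omega)]
          trivial
        by_cases hj2 : j = (p : ℤ) + 2
        · rw [show j - 2 = (p : ℤ) from by omega, FilC_mid _ (by omega) (by omega), mem_mid]
          exact ⟨hNxK x, by rw [hFil'top _ le_rfl]; trivial⟩
        by_cases hj3 : j = (p : ℤ) + 1
        · rw [show j - 2 = (p : ℤ) - 1 from by omega, FilC_mid _ (by omega) (by omega), mem_mid]
          refine ⟨hNxK x, ?_⟩
          have h1 : (N' ^ p) (π ⟨N x, hNxK x⟩) = 0 := by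
            rw [hπN'k, hπ0, hNrval]
            refine ⟨x, ?_⟩
            rw [pow_succ, Module.End.mul_apply]
          exact hax'.ker_le p _ h1
        by_cases hj4 : j ≤ -(p : ℤ) - 2
        · rw [FilC_bot _ hj4] at hx
          rw [show x = 0 from by simpa using hx, map_zero]
          exact zero_mem _
        -- now -p-1 ≤ j ≤ p
        rw [FilC_mid j (by omega) (by omega), mem_mid] at hx
        obtain ⟨hxK, hx'⟩ := hx
        by_cases hj5 : j = -(p : ℤ) - 1
        · -- x ∈ Rn, so N x = 0
          rw [hj5, hFil'bot _ le_rfl] at hx'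
          have hxR : x ∈ Rn := (hπ0 ⟨x, hxK⟩).mp (by simpa using hx')
          rw [hNR x hxR]
          exact zero_mem _
        by_cases hj6 : j = -(p : ℤ)
        · -- use surjectivity at level p to show N x = 0
          rw [hj6] at hx'
          rw [FilC_bot (j - 2) (by omega), Submodule.mem_bot]
          obtain ⟨y', hy', hr⟩ := hax'.surj p _ hx'
          rw [hFil'bot _ le_rfl] at hr
          have hr0 : (N' ^ p) y' = π ⟨x, hxK⟩ := sub_eq_zero.mp (by simpa using hr)
          obtain ⟨y, rfl⟩ := hπsurj y'
          rw [hπN'k] at hr0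
          have hd : ((Nr ^ p) y - ⟨x, hxK⟩ : Kn) ∈ I' := hπeq _ _ hr0
          obtain ⟨w, hw⟩ := (hmemI' _).mp hd
          have hval : (((Nr ^ p) y - ⟨x, hxK⟩ : Kn) : V) = (N ^ p) (y : V) - x := by
            simp [hNrval]
          have hxeq : x = (N ^ p) (y : V) - (N ^ (p + 1)) w := by
            have h2 : (N ^ (p + 1)) w = (N ^ p) (y : V) - x := by rw [hw, hval]
            rw [h2]
            abel
          rw [hxeq, map_sub]
          have e1 : N ((N ^ p) (y : V)) = (N ^ (p + 1)) (y : V) := by rw [pow_succ']; rfl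
          rw [e1, (memKn _).mp y.2, hNR ((N ^ (p + 1)) w) ⟨w, rfl⟩]
          simp
        -- now -p+1 ≤ j ≤ p
        rw [show j - 2 = j - 2 from rfl]
        rw [FilC_mid (j - 2) (by omega) (by omega), mem_mid]
        refine ⟨hNxK x, ?_⟩
        rw [hπNx x hxK]
        exact hax'.shift j _ hx'
      -- SURJECTIVITY clause for FilC
      have hCsurj : ∀ k : ℕ, ∀ x ∈ FilC (-(k : ℤ)),
          ∃ y ∈ FilC (k : ℤ), (N ^ k) y - x ∈ FilC (-(k : ℤ) - 1) := by
        intro k x hx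
        by_cases hk : (k : ℤ) ≤ (p : ℤ)
        · rw [FilC_mid _ (by omega) (by omega), mem_mid] at hx
          obtain ⟨hxK, hx'⟩ := hx
          obtain ⟨y', hy', hr⟩ := hax'.surj k _ hx'
          obtain ⟨y, rfl⟩ := hπsurj y'
          refine ⟨(y : V), ?_, ?_⟩
          · rw [FilC_mid _ (by omega) (by omega), mem_mid]
            exact ⟨y.2, hy'⟩
          · rw [FilC_mid _ (by omega) (by omega), mem_mid]
            have hrK : (N ^ k) (y : V) - x ∈ Kn := sub_mem (hNkK k y) hxK
            refine ⟨hrK, ?_⟩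
            have e : π ⟨(N ^ k) (y : V) - x, hrK⟩ = (N' ^ k) (π y) - π ⟨x, hxK⟩ := by
              rw [hπN'k, ← map_sub]
              exact congrArg π (Subtype.ext (by simp [hNrval]))
            rw [e]
            exact hr
        · by_cases hk2 : k = p + 1
          · subst hk2
            rw [show -((p + 1 : ℕ) : ℤ) = -(p : ℤ) - 1 from by push_cast; ring,
              FilC_mid _ (by omega) (by omega), mem_mid] at hx
            obtain ⟨hxK, hx'⟩ := hx
            rw [hFil'bot _ le_rfl] at hx'
            have hxR : x ∈ Rn := (hπ0 ⟨x, hxK⟩).mp (by simpa using hx')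
            obtain ⟨w, hw⟩ := (memRn x).mp hxR
            refine ⟨w, ?_, ?_⟩
            · rw [FilC_top _ (by push_cast; omega)]
              trivial
            · rw [hw]
              simpa using zero_mem _
          · rw [FilC_bot _ (by omega)] at hx
            have hx0 : x = 0 := by simpa using hx
            refine ⟨0, ?_, ?_⟩
            · rw [FilC_top _ (by omega)]
              trivial
            · rw [hx0, map_zero, sub_zero]
              exact zero_mem _
      -- INJECTIVITY clause for FilC
      have hCinj : ∀ k : ℕ, ∀ y ∈ FilC (k : ℤ),
          (N ^ k) y ∈ FilC (-(k : ℤ) - 1) → y ∈ FilC ((k : ℤ) - 1) := by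
        intro k y hy h2
        by_cases hk : (k : ℤ) ≤ (p : ℤ)
        · rw [FilC_mid _ (by omega) (by omega), mem_mid] at hy
          obtain ⟨hyK, hy'⟩ := hy
          rw [FilC_mid _ (by omega) (by omega), mem_mid] at h2
          obtain ⟨h2K, h2'⟩ := h2
          rw [hπNkx k y hyK] at h2'
          have h3 := hax'.inj k _ hy' h2'
          rw [FilC_mid _ (by omega) (by omega), mem_mid]
          exact ⟨hyK, h3⟩
        · by_cases hk2 : k = p + 1
          · subst hk2
            rw [FilC_bot _ (by push_cast; omega)] at h2
            have hyK : y ∈ Kn := by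
              rw [memKn]
              simpa using h2
            rw [show ((p + 1 : ℕ) : ℤ) - 1 = (p : ℤ) from by push_cast; ring,
              FilC_mid _ (by omega) (by omega), mem_mid]
            exact ⟨hyK, by rw [hFil'top _ le_rfl]; trivial⟩
          · rw [FilC_top _ (by omega)]
            trivial
      have hCfirst : ∀ k : ℕ, ∀ y ∈ FilC (k : ℤ), (N ^ k) y ∈ FilC (-(k : ℤ)) := by
        intro k y hy
        have h := pow_shift hCshift k _ y hy
        rwa [show (k : ℤ) - 2 * k = -(k : ℤ) from by ring] at h
      have hCmono : Monotone FilC := by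
        intro i j hij
        by_cases h1 : (p : ℤ) + 1 ≤ j
        · rw [FilC_top j h1]
          exact le_top
        · by_cases h2 : i ≤ -(p : ℤ) - 2
          · rw [FilC_bot i h2]
            exact bot_le
          · rw [FilC_mid i (by omega) (by omega), FilC_mid j (by omega) (by omega)]
            exact Submodule.map_mono (Submodule.comap_mono (hax'.mono hij))
      have haxC : Ax N FilC :=
        ⟨hCmono, ⟨-(p : ℤ) - 2, fun j hj => FilC_bot j hj⟩,
          ⟨(p : ℤ) + 1, fun j hj => FilC_top j hj⟩, hCshift,
          fun k => ⟨hCfirst k, hCsurj k, hCinj k⟩⟩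
      refine ⟨FilC, haxC, ?_⟩
      -- UNIQUENESS
      intro Fil₁ h₁
      have top₁ : ∀ j : ℤ, (p : ℤ) + 1 ≤ j → Fil₁ j = ⊤ := by
        intro j hj
        exact h₁.top_of (n := p + 2) (hpow0 _ le_rfl) j (by push_cast; omega)
      have bot₁ : ∀ j : ℤ, j ≤ -(p : ℤ) - 2 → Fil₁ j = ⊥ := by
        intro j hj
        exact h₁.bot_of (n := p + 2) (hpow0 _ le_rfl) j (by push_cast; omega)
      have ker₁ : Fil₁ ((p : ℤ)) = Kn := by
        have h := h₁.eq_ker (n := p + 1) hN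
        rw [show ((p + 1 : ℕ) : ℤ) - 1 = (p : ℤ) from by push_cast; ring] at h
        rw [h, hKn]
      have rng₁ : Fil₁ (-(p : ℤ) - 1) = Rn := by
        have h := h₁.eq_range (n := p + 1) hN
        rw [show -((p + 1 : ℕ) : ℤ) = -(p : ℤ) - 1 from by push_cast; ring] at h
        rw [h, hRn]
      -- the induced filtration on the subquotient
      set Fil₁' : ℤ → Submodule F (Kn ⧸ I') :=
        fun j => Submodule.map π (Submodule.comap Kn.subtype (Fil₁ j ⊔ Rn)) with hF1'def
      have mem1' : ∀ (j : ℤ) (z : Kn), π z ∈ Fil₁' j ↔ (z : V) ∈ Fil₁ j ⊔ Rn := by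
        intro j z
        constructor
        · intro h
          obtain ⟨w, hw, hwz⟩ := Submodule.mem_map.mp h
          have hd : (w - z : Kn) ∈ I' := hπeq w z hwz
          have hzval : (z : V) = (w : V) - ((w - z : Kn) : V) := by
            simp
          rw [hzval]
          exact sub_mem hw (Submodule.mem_sup_right ((hmemI' _).mp hd))
        · intro h
          exact Submodule.mem_map.mpr ⟨z, h, rfl⟩
      have sup₁ : ∀ j : ℤ, -(p : ℤ) - 1 ≤ j → Fil₁ j ⊔ Rn = Fil₁ j := by
        intro j hj
        refine sup_eq_left.mpr ?_
        rw [← rng₁]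
        exact h₁.mono hj
      have le₁ : ∀ j : ℤ, j ≤ (p : ℤ) → Fil₁ j ≤ Kn := by
        intro j hj
        rw [← ker₁]
        exact h₁.mono hj
      have top₁' : ∀ j : ℤ, (p : ℤ) ≤ j → Fil₁' j = ⊤ := by
        intro j hj
        rw [eq_top_iff]
        intro z _
        obtain ⟨w, rfl⟩ := hπsurj z
        rw [mem1']
        refine Submodule.mem_sup_left ?_
        have hw : (w : V) ∈ Fil₁ ((p : ℤ)) := by rw [ker₁]; exact w.2
        exact h₁.mono hj hw
      have bot₁' : ∀ j : ℤ, j ≤ -(p : ℤ) - 1 → Fil₁' j = ⊥ := by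
        intro j hj
        rw [eq_bot_iff]
        intro z hz
        obtain ⟨w, rfl⟩ := hπsurj z
        rw [mem1'] at hz
        have hwR : (w : V) ∈ Rn := by
          have h1 : Fil₁ j ⊔ Rn ≤ Rn := sup_le (by rw [← rng₁]; exact h₁.mono hj) le_rfl
          exact h1 hz
        rw [Submodule.mem_bot]
        exact (hπ0 w).mpr hwR
      have sh₁' : ∀ j : ℤ, ∀ z ∈ Fil₁' j, N' z ∈ Fil₁' (j - 2) := by
        intro j z hz
        obtain ⟨w, rfl⟩ := hπsurj z
        rw [mem1'] at hz
        obtain ⟨u, hu, v, hv, huv⟩ := Submodule.mem_sup.mp hz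
        rw [hπN', mem1', hNrdef, LinearMap.restrict_coe_apply]
        have e : N (w : V) = N u := by
          rw [← huv, map_add, hNR v hv, add_zero]
        rw [e]
        exact Submodule.mem_sup_left (h₁.shift j u hu)
      have surj₁' : ∀ k : ℕ, ∀ z ∈ Fil₁' (-(k : ℤ)),
          ∃ y' ∈ Fil₁' (k : ℤ), (N' ^ k) y' - z ∈ Fil₁' (-(k : ℤ) - 1) := by
        intro k z hz
        by_cases hk : (k : ℤ) ≤ (p : ℤ)
        · obtain ⟨w, rfl⟩ := hπsurj z
          rw [mem1', sup₁ _ (by omega)] at hz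
          obtain ⟨y, hy, hr⟩ := h₁.surj k _ hz
          have hyK : y ∈ Kn := le₁ _ (by omega) hy
          refine ⟨π ⟨y, hyK⟩, ?_, ?_⟩
          · rw [mem1']
            exact Submodule.mem_sup_left hy
          · have e : (N' ^ k) (π ⟨y, hyK⟩) - π w = π ((Nr ^ k) ⟨y, hyK⟩ - w) := by
              rw [hπN'k, map_sub]
            rw [e, mem1']
            have hval : (((Nr ^ k) ⟨y, hyK⟩ - w : Kn) : V) = (N ^ k) y - (w : V) := by
              simp [hNrval]
            rw [hval]
            exact Submodule.mem_sup_left hr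
        · have hz0 : z = 0 := by
            obtain ⟨w, rfl⟩ := hπsurj z
            rw [mem1'] at hz
            have hwR : (w : V) ∈ Rn := by
              have h1 : Fil₁ (-(k : ℤ)) ⊔ Rn ≤ Rn :=
                sup_le (by rw [← rng₁]; exact h₁.mono (by omega)) le_rfl
              exact h1 hz
            exact (hπ0 w).mpr hwR
          refine ⟨0, zero_mem _, ?_⟩
          rw [hz0, map_zero, sub_zero]
          exact zero_mem _
      have inj₁' : ∀ k : ℕ, ∀ z ∈ Fil₁' (k : ℤ),
          (N' ^ k) z ∈ Fil₁' (-(k : ℤ) - 1) → z ∈ Fil₁' ((k : ℤ) - 1) := by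
        intro k z hz h2
        by_cases hk : (k : ℤ) ≤ (p : ℤ)
        · obtain ⟨w, rfl⟩ := hπsurj z
          rw [mem1', sup₁ _ (by omega)] at hz
          rw [hπN'k, mem1', sup₁ _ (by omega), hNrval] at h2
          have h3 := h₁.inj k _ hz h2
          rw [mem1']
          exact Submodule.mem_sup_left h3
        · rw [top₁' _ (by omega)]
          trivial
      have first₁' : ∀ k : ℕ, ∀ z ∈ Fil₁' (k : ℤ), (N' ^ k) z ∈ Fil₁' (-(k : ℤ)) := by
        intro k z hz
        have h := pow_shift sh₁' k _ z hz
        rwa [show (k : ℤ) - 2 * k = -(k : ℤ) from by ring] at h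
      have hax₁' : Ax N' Fil₁' :=
        ⟨fun i j hij =>
            Submodule.map_mono (Submodule.comap_mono (sup_le_sup_right (h₁.mono hij) _)),
          ⟨-(p : ℤ) - 1, fun j hj => bot₁' j hj⟩, ⟨(p : ℤ), fun j hj => top₁' j hj⟩,
          sh₁', fun k => ⟨first₁' k, surj₁' k, inj₁' k⟩⟩
      have hEq' : Fil₁' = Fil' := huniq' Fil₁' hax₁'
      funext j
      by_cases hj1 : (p : ℤ) + 1 ≤ j
      · rw [top₁ j hj1, FilC_top j hj1]
      by_cases hj2 : j ≤ -(p : ℤ) - 2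
      · rw [bot₁ j hj2, FilC_bot j hj2]
      rw [FilC_mid j (by omega) (by omega)]
      apply le_antisymm
      · intro x hx
        have hxK : x ∈ Kn := le₁ j (by omega) hx
        rw [mem_mid]
        refine ⟨hxK, ?_⟩
        rw [← hEq', mem1']
        exact Submodule.mem_sup_left hx
      · intro x hx
        rw [mem_mid] at hx
        obtain ⟨hxK, hx'⟩ := hx
        rw [← hEq', mem1', sup₁ j (by omega)] at hx'
        exact hx'

end MonodromyAux

/-- Existence and uniqueness of the monodromy filtration of a nilpotent
endomorphism of a finite-dimensional vector space. -/
theorem stmt0 {K V : Type*} [Field K] [AddCommGroup V] [Module K V]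
    [FiniteDimensional K V] (N : Module.End K V) (hN : IsNilpotent N) :
    ∃! Fil : ℤ → Submodule K V,
      Monotone Fil ∧
      (∃ a : ℤ, ∀ j ≤ a, Fil j = ⊥) ∧
      (∃ b : ℤ, ∀ j : ℤ, b ≤ j → Fil j = ⊤) ∧
      (∀ j : ℤ, ∀ x ∈ Fil j, N x ∈ Fil (j - 2)) ∧
      (∀ k : ℕ,
        (∀ y ∈ Fil (k : ℤ), (N ^ k) y ∈ Fil (-(k : ℤ))) ∧
        (∀ x ∈ Fil (-(k : ℤ)), ∃ y ∈ Fil (k : ℤ),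
          (N ^ k) y - x ∈ Fil (-(k : ℤ) - 1)) ∧
        (∀ y ∈ Fil (k : ℤ), (N ^ k) y ∈ Fil (-(k : ℤ) - 1) → y ∈ Fil ((k : ℤ) - 1))) := by
  obtain ⟨n, hn⟩ := hN
  exact MonodromyAux.aux n V N hn
end

section
/- Let V be a vector space over a field F, let Φ : V → V be an invertible linear map, let N : V → V be linear, and let q ∈ F be nonzero, such that N ∘ Φ = q • (Φ ∘ N). Then for every λ ∈ F, N maps the generalized eigenspace of Φ for eigenvalue λ into the generalized eigenspace of Φ for eigenvalue λ/q. (Concretely: if (Φ - λ)^k v = 0 then (Φ - λ/q)^k (N v) = 0.) -/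
/-- If `NΦ = q·ΦN` then `N` maps the generalized eigenspace of `Φ` for `λ` into the
generalized eigenspace for `λ/q`. -/
theorem stmt2 {F V : Type*} [Field F] [AddCommGroup V] [Module F V]
    (Φ N : Module.End F V) (hΦ : Function.Bijective Φ)
    (q : F) (hq : q ≠ 0) (h : N * Φ = q • (Φ * N)) :
    ∀ (lam : F) (k : ℕ) (v : V),
      ((Φ - lam • (1 : Module.End F V)) ^ k) v = 0 →
      ((Φ - (lam / q) • (1 : Module.End F V)) ^ k) (N v) = 0 := by
  intro lam k v hv
  have hcomm : Φ * N = q⁻¹ • (N * Φ) := by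
    rw [h, smul_smul, inv_mul_cancel₀ hq, one_smul]
  have key : (Φ - (lam / q) • (1 : Module.End F V)) * N
      = q⁻¹ • (N * (Φ - lam • (1 : Module.End F V))) := by
    rw [sub_mul, mul_sub, smul_sub, hcomm]
    congr 1
    rw [smul_mul_assoc, one_mul, mul_smul_comm, mul_one, div_eq_mul_inv, mul_comm, smul_smul]
  have main : ∀ k : ℕ, (Φ - (lam / q) • (1 : Module.End F V)) ^ k * N
      = (q⁻¹) ^ k • (N * (Φ - lam • (1 : Module.End F V)) ^ k) := by
    intro k
    induction k with
    | zero => simp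
    | succ n ih =>
      rw [pow_succ', mul_assoc, ih, mul_smul_comm, ← mul_assoc, key, smul_mul_assoc,
        smul_smul, mul_assoc, ← pow_succ', ← pow_succ]
  have := congrArg (fun f : Module.End F V => f v) (main k)
  simp only [Module.End.mul_apply, LinearMap.smul_apply] at this
  rw [this, hv, map_zero, smul_zero]
end

section
/- Let R be a commutative ring, ϖ ∈ R a nonzerodivisor, and M an R-module with no ϖ-torsion (i.e. ϖ·x = 0 implies x = 0). Then the ϖ-adic completion of M, namely lim_n M/ϖⁿM, also has no ϖ-torsion. -/
/-- The ϖ-adic completion of a module with no ϖ-torsion has no ϖ-torsion. -/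
theorem stmt5 {R : Type*} [CommRing R] {M : Type*} [AddCommGroup M] [Module R M]
    (ϖ : R) (hϖ : ϖ ∈ nonZeroDivisors R)
    (hM : ∀ m : M, ϖ • m = 0 → m = 0) :
    ∀ x : AdicCompletion (Ideal.span {ϖ}) M, ϖ • x = 0 → x = 0 := by
  intro x hx
  apply AdicCompletion.ext
  intro n
  obtain ⟨m, hm⟩ := Submodule.Quotient.mk_surjective _ (x.val (n + 1))
  have hxsucc : ϖ • x.val (n + 1) = 0 := by
    rw [← AdicCompletion.val_smul_apply, hx, AdicCompletion.val_zero_apply]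
  rw [← hm, ← Submodule.Quotient.mk_smul, Submodule.Quotient.mk_eq_zero] at hxsucc
  rw [Ideal.span_singleton_pow, Submodule.ideal_span_singleton_smul] at hxsucc
  obtain ⟨m', -, hm'⟩ := Set.mem_smul_set.mp hxsucc
  have key : m = ϖ ^ n • m' := by
    have h0 : ϖ • (m - ϖ ^ n • m') = 0 := by
      rw [smul_sub, smul_smul, ← pow_succ', hm', sub_self]
    exact sub_eq_zero.mp (hM _ h0)
  have := x.property (Nat.le_succ n)
  rw [← this, ← hm, key, AdicCompletion.val_zero_apply, Submodule.mapQ_apply, LinearMap.id_apply,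
    Submodule.Quotient.mk_eq_zero, Ideal.span_singleton_pow,
    Submodule.ideal_span_singleton_smul]
  exact Submodule.smul_mem_pointwise_smul _ _ _ Submodule.mem_top
end

section
/- Let A and B be abelian groups, p a prime, k a positive integer, and f : A → B, g : B → A group homomorphisms with g ∘ f = (multiplication by p^k on A) and f ∘ g = (multiplication by p^k on B). Then the inverse limits lim(⋯ → A →^{×p} A →^{×p} A) and lim(⋯ → B →^{×p} B →^{×p} B) of the towers with transition map multiplication by p are isomorphic as abelian groups. -/
/-- The inverse limit of the tower `⋯ → A →^{×p} A →^{×p} A`. -/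
def limTower (p : ℕ) (A : Type*) [AddCommGroup A] : AddSubgroup (ℕ → A) where
  carrier := {s | ∀ n, p • s (n + 1) = s n}
  add_mem' := by
    intro a b ha hb n
    show p • (a (n + 1) + b (n + 1)) = a n + b n
    rw [smul_add, ha n, hb n]
  zero_mem' := by intro n; simp
  neg_mem' := by
    intro a ha n
    show p • (-(a (n + 1))) = -(a n)
    rw [smul_neg, ha n]

lemma limTower_pow_smul {p : ℕ} {A : Type*} [AddCommGroup A] {s : ℕ → A}
    (hs : s ∈ limTower p A) : ∀ (k n : ℕ), p ^ k • s (n + k) = s n := by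
  intro k
  induction k with
  | zero => intro n; simp
  | succ k ih =>
    intro n
    have : n + (k + 1) = (n + 1) + k := by ring
    rw [this, pow_succ, mul_comm, mul_smul, ih (n + 1), hs n]

/-- p-power isogenous abelian groups have isomorphic inverse limits along
multiplication by p. -/
theorem stmt10 {A B : Type*} [AddCommGroup A] [AddCommGroup B]
    (p k : ℕ) (hp : p.Prime) (hk : 0 < k)
    (f : A →+ B) (g : B →+ A)
    (hgf : ∀ a : A, g (f a) = p ^ k • a)
    (hfg : ∀ b : B, f (g b) = p ^ k • b) :
    Nonempty ((limTower p A) ≃+ (limTower p B)) := by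
  refine ⟨{
    toFun := fun s => ⟨fun n => f (s.1 n), fun n => by
      rw [← map_nsmul, s.2 n]⟩
    invFun := fun t => ⟨fun n => g (t.1 (n + k)), fun n => by
      rw [← map_nsmul]
      have : n + 1 + k = n + k + 1 := by ring
      rw [this, t.2 (n + k)]⟩
    left_inv := fun s => by
      ext n
      show g (f (s.1 (n + k))) = s.1 n
      rw [hgf, limTower_pow_smul s.2]
    right_inv := fun t => by
      ext n
      show f (g (t.1 (n + k))) = t.1 n
      rw [hfg, limTower_pow_smul t.2]
    map_add' := fun s t => by
      ext n
      show f (s.1 n + t.1 n) = f (s.1 n) + f (t.1 n)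
      rw [map_add] }⟩
end

section
/- Let V be a finite-dimensional vector space over an algebraically closed field F, Φ an invertible linear endomorphism of V, q ∈ F nonzero, and N a linear endomorphism with N∘Φ = q•(Φ∘N). Let w : F^× → ℤ be a function on eigenvalues with w(λ/q) = w(λ) - 2 for all λ, and for m ∈ ℤ define W_m ⊆ V as the sum of the generalized eigenspaces of Φ for all eigenvalues λ with w(λ) ≤ m. Then N(W_m) ⊆ W_{m-2} for all m. -/
/-- The monodromy operator N shifts the weight filtration (built from generalized
eigenspaces of Φ) down by 2. -/
theorem stmt14 {F V : Type*} [Field F] [IsAlgClosed F] [AddCommGroup V] [Module F V]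
    [FiniteDimensional F V]
    (Φ N : Module.End F V) (hΦ : Function.Bijective Φ) (q : Fˣ)
    (h : N * Φ = (q : F) • (Φ * N))
    (w : Fˣ → ℤ) (hw : ∀ lam : Fˣ, w (lam / q) = w lam - 2)
    (W : ℤ → Submodule F V)
    (hW : ∀ m : ℤ, W m = ⨆ lam : Fˣ, ⨆ _ : w lam ≤ m,
      ⨆ k : ℕ, LinearMap.ker ((Φ - (lam : F) • (1 : Module.End F V)) ^ k)) :
    ∀ m : ℤ, ∀ x ∈ W m, N x ∈ W (m - 2) := by
  intro m x hx
  suffices hmap : (W m).map N ≤ W (m - 2) from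
    hmap (Submodule.mem_map_of_mem hx)
  rw [hW m, hW (m - 2)]
  simp only [Submodule.map_iSup]
  refine iSup_le fun lam => iSup_le fun hlam => iSup_le fun k => ?_
  have key : ∀ j : ℕ, N * (Φ - (lam : F) • 1) ^ j
      = ((q : F) ^ j) • ((Φ - ((lam / q : Fˣ) : F) • 1) ^ j * N) := by
    intro j
    induction j with
    | zero => simp
    | succ j ih =>
      have step : N * (Φ - (lam : F) • 1)
          = (q : F) • ((Φ - ((lam / q : Fˣ) : F) • 1) * N) := by
        have hq : (q : F) ≠ 0 := q.ne_zero
        push_cast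
        rw [mul_sub, h, sub_mul, smul_sub]
        congr 1
        rw [mul_smul_comm, mul_one, smul_mul_assoc, one_mul, smul_smul,
          mul_div_cancel₀ _ hq]
      calc N * (Φ - (lam : F) • 1) ^ (j + 1)
          = (N * (Φ - (lam : F) • 1) ^ j) * (Φ - (lam : F) • 1) := by
            rw [pow_succ, mul_assoc]
        _ = ((q : F) ^ j) • ((Φ - ((lam / q : Fˣ) : F) • 1) ^ j * (N * (Φ - (lam : F) • 1))) := by
            rw [ih, smul_mul_assoc, mul_assoc]
        _ = ((q : F) ^ (j + 1)) • ((Φ - ((lam / q : Fˣ) : F) • 1) ^ (j + 1) * N) := by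
            rw [step, pow_succ]
            rw [mul_smul_comm, smul_smul, pow_succ]
            ring_nf
            rw [mul_assoc]
  have hker : (LinearMap.ker ((Φ - (lam : F) • 1) ^ k)).map N
      ≤ LinearMap.ker ((Φ - ((lam / q : Fˣ) : F) • 1) ^ k) := by
    rintro _ ⟨y, hy, rfl⟩
    have hy' : ((Φ - (lam : F) • 1) ^ k) y = 0 := hy
    have := congrArg (fun f : Module.End F V => f y) (key k).symm
    simp only [Module.End.mul_apply, LinearMap.smul_apply, hy', map_zero] at this
    have hq : ((q : F) ^ k) ≠ 0 := pow_ne_zero _ q.ne_zero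
    have h0 : ((Φ - ((lam / q : Fˣ) : F) • 1) ^ k) (N y) = 0 := by
      rcases smul_eq_zero.mp this with h1 | h2
      · exact absurd h1 hq
      · exact h2
    exact h0
  refine hker.trans ?_
  have hlam' : w (lam / q) ≤ m - 2 := by rw [hw]; omega
  exact le_iSup_of_le (lam / q) (le_iSup_of_le hlam' (le_iSup_of_le k le_rfl))
end
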